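/- arXiv:2303.14689 — 2 statements merged into one kernel-verified Lean document; each statement's English description precedes it below -/
import Mathlib

section
/- For r = 5 and every λ ∈ [1/7, 1], we have f_{5,λ}(ε) ≤ λ² for all ε ∈ [0,1]. -/
/-- The function `f_{r,λ}(ε)` from Lemma 4.3 of the paper. -/
noncomputable def f (r : ℕ) (lam ε : ℝ) : ℝ :=
  (1 / (r - 1 : ℝ)) * ∑ i ∈ Finset.Icc 1 (r - 1),
    ((r - 1).choose i : ℝ) * (1 - ε) ^ (r - 1 - i) * ε ^ (i - 1) * lam ^ 2
      / (lam + (1 - lam) * (2 : ℝ) ^ ((1 : ℤ) - (i : ℤ)))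

/-- Remark after Lemma 4.3: for `r = 5` and every `λ ∈ [1/7, 1]`,
`f_{5,λ}(ε) ≤ λ²` for all `ε ∈ [0,1]`. -/
theorem stmt10 (lam : ℝ) (hlam : lam ∈ Set.Icc (1 / 7 : ℝ) 1)
    (ε : ℝ) (hε : ε ∈ Set.Icc (0 : ℝ) 1) :
    f 5 lam ε ≤ lam ^ 2 := by
  obtain ⟨hl1, hl2⟩ := hlam
  obtain ⟨he1, he2⟩ := hε
  have hIcc : Finset.Icc 1 4 = ({1, 2, 3, 4} : Finset ℕ) := by decide
  rw [f]
  norm_num [hIcc, Finset.sum_insert, Finset.mem_insert, Nat.choose]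
  have d2 : (0:ℝ) < lam + (1 - lam) * (1/2) := by nlinarith
  have d3 : (0:ℝ) < lam + (1 - lam) * (1/4) := by nlinarith
  have d4 : (0:ℝ) < lam + (1 - lam) * (1/8) := by nlinarith
  have he2' : (0:ℝ) ≤ 1 - ε := by linarith
  have n2 : (0:ℝ) ≤ (1-ε)^2 * ε * lam^2 := by positivity
  have n3 : (0:ℝ) ≤ (1-ε) * ε^2 * lam^2 := by positivity
  have n4 : (0:ℝ) ≤ ε^3 * lam^2 := by positivity
  have t2 : 6*(1-ε)^2*ε*lam^2 / (lam + (1 - lam) * (1/2))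
      ≤ 6*(1-ε)^2*ε*lam^2*(7/4) := by
    rw [div_le_iff₀ d2]; nlinarith
  have t3 : 4*(1-ε)*ε^2*lam^2 / (lam + (1 - lam) * (1/4))
      ≤ 4*(1-ε)*ε^2*lam^2*(14/5) := by
    rw [div_le_iff₀ d3]; nlinarith
  have t4 : ε^3*lam^2 / (lam + (1 - lam) * (1/8))
      ≤ ε^3*lam^2*4 := by
    rw [div_le_iff₀ d4]; nlinarith
  nlinarith [t2, t3, t4, n2, n3, n4, sq_nonneg lam]
end

section
/- The function g : [0,∞) → ℝ defined by g(s) = ∫ tanh( s + √s·z ) dγ(z), where γ is the standard Gaussian measure on ℝ, is continuous and strictly increasing on [0,∞). -/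
open ProbabilityTheory MeasureTheory

/-- `g(s) = ∫ tanh(s + √s·z) dγ(z)`, `γ` the standard Gaussian measure on `ℝ`. -/
noncomputable def g (t : ℝ) : ℝ :=
  ∫ z, Real.tanh (t + Real.sqrt t * z) ∂(gaussianReal 0 1)

namespace Stmt13Aux

open Real Set Filter MeasureTheory Topology

/-! ### Basic facts about `tanh` -/

lemma tanh_lt_one (x : ℝ) : Real.tanh x < 1 := by
  rw [Real.tanh_eq_sinh_div_cosh, div_lt_one (Real.cosh_pos x)]
  nlinarith [Real.cosh_sub_sinh x, Real.exp_pos (-x)]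

lemma neg_one_lt_tanh (x : ℝ) : -1 < Real.tanh x := by
  rw [Real.tanh_eq_sinh_div_cosh, lt_div_iff₀ (Real.cosh_pos x)]
  nlinarith [Real.cosh_add_sinh x, Real.exp_pos x]

lemma abs_tanh_le_one (x : ℝ) : |Real.tanh x| ≤ 1 :=
  abs_le.2 ⟨(neg_one_lt_tanh x).le, (tanh_lt_one x).le⟩

lemma sq_tanh_lt_one (x : ℝ) : Real.tanh x ^ 2 < 1 := by
  nlinarith [tanh_lt_one x, neg_one_lt_tanh x]

lemma one_sub_sq_tanh_pos (x : ℝ) : 0 < 1 - Real.tanh x ^ 2 := by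
  nlinarith [sq_tanh_lt_one x]

lemma one_sub_sq_tanh_le_one (x : ℝ) : 1 - Real.tanh x ^ 2 ≤ 1 := by
  nlinarith [sq_nonneg (Real.tanh x)]

lemma hasDerivAt_tanh (x : ℝ) : HasDerivAt Real.tanh (1 - Real.tanh x ^ 2) x := by
  have h := (Real.hasDerivAt_sinh x).div (Real.hasDerivAt_cosh x) (Real.cosh_pos x).ne'
  have hfun : Real.tanh = fun y => Real.sinh y / Real.cosh y :=
    funext fun y => Real.tanh_eq_sinh_div_cosh y
  rw [hfun]
  refine h.congr_deriv ?_
  have hc := (Real.cosh_pos x).ne'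
  field_simp

lemma continuous_tanh : Continuous Real.tanh :=
  continuous_iff_continuousAt.2 fun x => (hasDerivAt_tanh x).continuousAt

/-! ### The standard Gaussian density -/

noncomputable def phi (z : ℝ) : ℝ := (Real.sqrt (2 * π))⁻¹ * Real.exp (-(z ^ 2) / 2)

lemma phi_eq : gaussianPDFReal 0 1 = phi := by
  ext z
  simp only [gaussianPDFReal, phi, NNReal.coe_one, mul_one, sub_zero]

lemma phi_pos (z : ℝ) : 0 < phi z := by
  have h2π : (0:ℝ) < 2 * π := by positivity
  exact mul_pos (inv_pos.2 (Real.sqrt_pos.2 h2π)) (Real.exp_pos _)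

lemma continuous_phi : Continuous phi := by
  unfold phi
  fun_prop

lemma hasDerivAt_phi (z : ℝ) : HasDerivAt phi (-z * phi z) z := by
  have h1 : HasDerivAt (fun z : ℝ => -(z ^ 2) / 2) (-z) z := by
    have := ((hasDerivAt_pow 2 z).neg).div_const 2
    refine this.congr_deriv ?_
    simp
    ring
  have h2 := h1.exp
  have h3 := h2.const_mul (Real.sqrt (2 * π))⁻¹
  refine h3.congr_deriv ?_
  unfold phi
  ring

lemma tendsto_phi (l : Filter ℝ) (h : Tendsto (fun z : ℝ => |z|) l atTop) :
    Tendsto phi l (nhds 0) := by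
  have h0 : Tendsto (fun z : ℝ => |z| ^ 2) l atTop :=
    (tendsto_pow_atTop two_ne_zero).comp h
  have h1 : Tendsto (fun z : ℝ => z ^ 2 / 2) l atTop := by
    simpa [sq_abs] using h0.atTop_div_const two_pos
  have h2 : Tendsto (fun z : ℝ => Real.exp (-(z ^ 2) / 2)) l (nhds 0) := by
    have := Real.tendsto_exp_neg_atTop_nhds_zero.comp h1
    refine this.congr fun z => ?_
    simp [Function.comp, neg_div]
  have h3 := h2.const_mul (Real.sqrt (2 * π))⁻¹
  rw [mul_zero] at h3
  exact h3

/-! ### Integrability facts for the Gaussian density -/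

lemma integrable_phi : Integrable phi := by
  have h := (integrable_exp_neg_mul_sq (b := (1:ℝ)/2) (by norm_num)).const_mul
    (Real.sqrt (2 * π))⁻¹
  refine h.congr (Eventually.of_forall fun z => ?_)
  unfold phi
  ring_nf

lemma integrable_abs_mul_phi : Integrable (fun z : ℝ => |z| * phi z) := by
  have h := ((integrable_mul_exp_neg_mul_sq (b := (1:ℝ)/2) (by norm_num)).abs).const_mul
    (Real.sqrt (2 * π))⁻¹
  refine h.congr (Eventually.of_forall fun z => ?_)
  simp only [abs_mul, Real.abs_exp, phi]
  ring_nf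

lemma integrable_linear_mul_phi (c : ℝ) : Integrable (fun z : ℝ => (c + |z|) * phi z) := by
  have := ((integrable_phi.const_mul c).add integrable_abs_mul_phi)
  refine this.congr (Eventually.of_forall fun z => ?_)
  simp only [Pi.add_apply]
  ring

/-! ### Transfer between the Gaussian measure and Lebesgue measure -/

lemma gaussian_eq_withDensity :
    gaussianReal 0 1 = (volume : Measure ℝ).withDensity
      (fun z => ((phi z).toNNReal : ENNReal)) := by
  rw [gaussianReal_of_var_ne_zero 0 one_ne_zero]
  congr 1
  ext z
  rw [gaussianPDF, phi_eq]
  rfl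

lemma integral_gaussian_eq (f : ℝ → ℝ) :
    ∫ z, f z ∂(gaussianReal 0 1) = ∫ z, phi z * f z := by
  rw [gaussian_eq_withDensity,
    integral_withDensity_eq_integral_smul
      ((continuous_phi.measurable).real_toNNReal) f]
  refine integral_congr_ae (Eventually.of_forall fun z => ?_)
  simp [NNReal.smul_def, Real.coe_toNNReal _ (phi_pos z).le]

lemma integrable_gaussian_iff (f : ℝ → ℝ) :
    Integrable f (gaussianReal 0 1) ↔ Integrable (fun z => phi z * f z) := by
  rw [gaussian_eq_withDensity,
    integrable_withDensity_iff_integrable_smul (continuous_phi.measurable).real_toNNReal]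
  constructor <;> intro h <;> refine h.congr (Eventually.of_forall fun z => ?_) <;>
    simp [NNReal.smul_def, Real.coe_toNNReal _ (phi_pos z).le]

lemma integrable_of_bounded {f : ℝ → ℝ} (hf : Continuous f) (C : ℝ)
    (h : ∀ z, |f z| ≤ C) : Integrable f (gaussianReal 0 1) :=
  (integrable_const C).mono' hf.aestronglyMeasurable (Eventually.of_forall h)

lemma integrable_linear_gaussian (c : ℝ) :
    Integrable (fun z : ℝ => c + |z|) (gaussianReal 0 1) := by
  rw [integrable_gaussian_iff]
  refine (integrable_linear_mul_phi c).congr (Eventually.of_forall fun z => ?_)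
  ring

lemma integrable_id_mul_bounded {f : ℝ → ℝ} (hf : Continuous f) (C : ℝ)
    (h : ∀ z, |f z| ≤ C) :
    Integrable (fun z : ℝ => z * f z) (gaussianReal 0 1) := by
  have hC : 0 ≤ C := le_trans (abs_nonneg (f 0)) (h 0)
  refine ((integrable_linear_gaussian 0).mul_const C).mono'
    ((continuous_id.mul hf).aestronglyMeasurable) (Eventually.of_forall fun z => ?_)
  have h1 : |z * f z| ≤ |z| * C := by
    rw [abs_mul]
    exact mul_le_mul_of_nonneg_left (h z) (abs_nonneg z)
  calc ‖z * f z‖ = |z * f z| := rfl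
    _ ≤ |z| * C := h1
    _ = (0 + |z|) * C := by ring

/-! ### The function `H` and its derivative -/

noncomputable def H (u : ℝ) : ℝ := ∫ z, Real.tanh (u ^ 2 + u * z) ∂(gaussianReal 0 1)

noncomputable def D (u : ℝ) : ℝ :=
  ∫ z, (1 - Real.tanh (u ^ 2 + u * z) ^ 2) * (2 * u + z) ∂(gaussianReal 0 1)

lemma hasDerivAt_inner (z : ℝ) (u : ℝ) :
    HasDerivAt (fun u : ℝ => Real.tanh (u ^ 2 + u * z))
      ((1 - Real.tanh (u ^ 2 + u * z) ^ 2) * (2 * u + z)) u := by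
  have h1 : HasDerivAt (fun u : ℝ => u ^ 2 + u * z) (2 * u + z) u := by
    have := (hasDerivAt_pow 2 u).add ((hasDerivAt_id u).mul_const z)
    refine this.congr_deriv ?_
    ring
  exact (hasDerivAt_tanh (u ^ 2 + u * z)).comp u h1

lemma hasDerivAt_H (u : ℝ) : HasDerivAt H (D u) u := by
  have key := hasDerivAt_integral_of_dominated_loc_of_deriv_le (μ := gaussianReal 0 1)
    (F := fun x z => Real.tanh (x ^ 2 + x * z))
    (F' := fun x z => (1 - Real.tanh (x ^ 2 + x * z) ^ 2) * (2 * x + z))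
    (x₀ := u) (bound := fun z => 2 * (|u| + 1) + |z|) (s := Metric.ball u 1) (Metric.ball_mem_nhds u one_pos)
    ?_ ?_ ?_ ?_ ?_ ?_
  · exact key.2
  · exact Eventually.of_forall fun x =>
      (continuous_tanh.comp (by fun_prop)).aestronglyMeasurable
  · exact integrable_of_bounded (continuous_tanh.comp (by fun_prop)) 1
      fun z => abs_tanh_le_one _
  · exact ((continuous_const.sub ((continuous_tanh.comp (by fun_prop)).pow 2)).mul
      (by fun_prop)).aestronglyMeasurable
  · refine Eventually.of_forall fun z x hx => ?_
    have h1 := one_sub_sq_tanh_pos (x ^ 2 + x * z)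
    have h2 := one_sub_sq_tanh_le_one (x ^ 2 + x * z)
    have hx' : |x - u| < 1 := by
      simpa [Real.dist_eq] using Metric.mem_ball.mp hx
    have hxu : |x| ≤ |u| + 1 := by
      have := abs_sub_abs_le_abs_sub x u
      linarith [hx'.le]
    have hb : |2 * x + z| ≤ 2 * (|u| + 1) + |z| := by
      calc |2 * x + z| ≤ |2 * x| + |z| := abs_add_le _ _
        _ = 2 * |x| + |z| := by rw [abs_mul]; norm_num
        _ ≤ 2 * (|u| + 1) + |z| := by linarith
    calc ‖(1 - Real.tanh (x ^ 2 + x * z) ^ 2) * (2 * x + z)‖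
        = |1 - Real.tanh (x ^ 2 + x * z) ^ 2| * |2 * x + z| := abs_mul _ _
      _ ≤ 1 * (2 * (|u| + 1) + |z|) := by
          refine mul_le_mul ?_ hb (abs_nonneg _) one_pos.le
          rw [abs_of_pos h1]; exact h2
      _ = 2 * (|u| + 1) + |z| := one_mul _
  · exact integrable_linear_gaussian _
  · exact Eventually.of_forall fun z x _ => hasDerivAt_inner z x

/-! ### The Stein identity -/

lemma hasDerivAt_T (u z : ℝ) :
    HasDerivAt (fun z : ℝ => Real.tanh (u ^ 2 + u * z))
      ((1 - Real.tanh (u ^ 2 + u * z) ^ 2) * u) z := by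
  have h1 : HasDerivAt (fun z : ℝ => u ^ 2 + u * z) u z := by
    have := (hasDerivAt_const z (u ^ 2)).add ((hasDerivAt_id z).const_mul u)
    refine this.congr_deriv ?_
    ring
  exact (hasDerivAt_tanh (u ^ 2 + u * z)).comp z h1

lemma stein (u : ℝ) :
    ∫ z, (1 - Real.tanh (u ^ 2 + u * z) ^ 2) * z ∂(gaussianReal 0 1)
      = ∫ z, -(2 * Real.tanh (u ^ 2 + u * z)
          * ((1 - Real.tanh (u ^ 2 + u * z) ^ 2) * u)) ∂(gaussianReal 0 1) := by
  set T : ℝ → ℝ := fun z => Real.tanh (u ^ 2 + u * z) with hTdef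
  have hcontT : Continuous T := continuous_tanh.comp (by fun_prop)
  set Q : ℝ → ℝ := fun z => 1 - T z ^ 2 with hQdef
  set Q' : ℝ → ℝ := fun z => -(2 * T z * ((1 - T z ^ 2) * u)) with hQ'def
  have hcontQ : Continuous Q := continuous_const.sub (hcontT.pow 2)
  have hcontQ' : Continuous Q' := by fun_prop
  have hQderiv : ∀ z, HasDerivAt Q (Q' z) z := by
    intro z
    have h1 := (hasDerivAt_T u z).pow 2
    have h2 := h1.const_sub (1 : ℝ)
    refine h2.congr_deriv ?_
    simp [hQ'def, hTdef]
  -- the product with the Gaussian density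
  have hPderiv : ∀ z, HasDerivAt (fun z => Q z * phi z)
      (Q' z * phi z + Q z * (-z * phi z)) z :=
    fun z => (hQderiv z).mul (hasDerivAt_phi z)
  have hQabs : ∀ z, |Q z| ≤ 1 := by
    intro z
    rw [hQdef]
    simp only
    rw [abs_of_pos (one_sub_sq_tanh_pos _)]
    exact one_sub_sq_tanh_le_one _
  have hQ'abs : ∀ z, |Q' z| ≤ 2 * |u| := by
    intro z
    have h1 : |T z| ≤ 1 := abs_tanh_le_one _
    have h2 : |1 - T z ^ 2| ≤ 1 := by
      rw [abs_of_pos (one_sub_sq_tanh_pos _)]; exact one_sub_sq_tanh_le_one _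
    simp only [hQ'def, abs_neg, abs_mul]
    have h4 : |(2:ℝ)| = 2 := by norm_num
    rw [h4]
    nlinarith [abs_nonneg (T z), abs_nonneg (1 - T z ^ 2), abs_nonneg u,
      mul_le_mul h1 h2 (abs_nonneg _) zero_le_one]
  -- integrability of the two summands of the derivative
  have hintA : Integrable (fun z => Q' z * phi z) := by
    refine ((integrable_linear_mul_phi (2 * |u|)).mono'
      ((hcontQ'.mul continuous_phi).aestronglyMeasurable)
      (Eventually.of_forall fun z => ?_))
    have hp := (phi_pos z).le
    calc ‖Q' z * phi z‖ = |Q' z| * phi z := by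
          rw [norm_mul, Real.norm_eq_abs, Real.norm_eq_abs, abs_of_nonneg hp]
      _ ≤ (2 * |u| + |z|) * phi z := by
          refine mul_le_mul_of_nonneg_right ?_ hp
          linarith [hQ'abs z, abs_nonneg z]
  have hintB : Integrable (fun z => Q z * (-z * phi z)) := by
    refine ((integrable_linear_mul_phi (2 * |u|)).mono'
      ((hcontQ.mul (continuous_neg.mul continuous_phi)).aestronglyMeasurable)
      (Eventually.of_forall fun z => ?_))
    have hp := (phi_pos z).le
    calc ‖Q z * (-z * phi z)‖ = |Q z| * (|z| * phi z) := by
          rw [norm_mul, norm_mul, Real.norm_eq_abs, Real.norm_eq_abs, Real.norm_eq_abs,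
            abs_neg, abs_of_nonneg hp]
      _ ≤ 1 * (|z| * phi z) := by
          refine mul_le_mul_of_nonneg_right (hQabs z) (by positivity)
      _ ≤ (2 * |u| + |z|) * phi z := by
          have := phi_pos z
          nlinarith [abs_nonneg u, abs_nonneg z]
  have hintP' : Integrable (fun z => Q' z * phi z + Q z * (-z * phi z)) :=
    hintA.add hintB
  -- limits of `Q * phi` at `±∞`
  have hbound : ∀ z, ‖Q z * phi z‖ ≤ phi z := by
    intro z
    have hp := (phi_pos z).le
    calc ‖Q z * phi z‖ = |Q z| * phi z := by
          rw [norm_mul, Real.norm_eq_abs, Real.norm_eq_abs, abs_of_nonneg hp]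
      _ ≤ 1 * phi z := mul_le_mul_of_nonneg_right (hQabs z) hp
      _ = phi z := one_mul _
  have htop : Tendsto (fun z => Q z * phi z) atTop (nhds 0) :=
    squeeze_zero_norm hbound (tendsto_phi atTop tendsto_abs_atTop_atTop)
  have hbot : Tendsto (fun z => Q z * phi z) atBot (nhds 0) :=
    squeeze_zero_norm hbound (tendsto_phi atBot tendsto_abs_atBot_atTop)
  -- fundamental theorem of calculus on the two half-lines
  have h1 : ∫ z in Ioi (0:ℝ), (Q' z * phi z + Q z * (-z * phi z))
      = 0 - Q 0 * phi 0 :=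
    integral_Ioi_of_hasDerivAt_of_tendsto' (fun x _ => hPderiv x)
      hintP'.integrableOn htop
  have h2 : ∫ z in Iic (0:ℝ), (Q' z * phi z + Q z * (-z * phi z))
      = Q 0 * phi 0 - 0 :=
    integral_Iic_of_hasDerivAt_of_tendsto' (fun x _ => hPderiv x)
      hintP'.integrableOn hbot
  have htot : ∫ z, (Q' z * phi z + Q z * (-z * phi z)) = 0 := by
    rw [← intervalIntegral.integral_Iic_add_Ioi hintP'.integrableOn hintP'.integrableOn,
      h1, h2]
    ring
  have hsum : (∫ z, Q' z * phi z) + ∫ z, Q z * (-z * phi z) = 0 := by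
    rw [← integral_add hintA hintB]
    exact htot
  -- now transfer to the Gaussian measure
  rw [integral_gaussian_eq, integral_gaussian_eq]
  have e1 : ∫ z, phi z * ((1 - Real.tanh (u ^ 2 + u * z) ^ 2) * z)
      = - ∫ z, Q z * (-z * phi z) := by
    rw [← integral_neg]
    refine integral_congr_ae (Eventually.of_forall fun z => ?_)
    simp only [hQdef, hTdef]
    ring
  have e2 : ∫ z, phi z * -(2 * Real.tanh (u ^ 2 + u * z)
      * ((1 - Real.tanh (u ^ 2 + u * z) ^ 2) * u)) = ∫ z, Q' z * phi z := by
    refine integral_congr_ae (Eventually.of_forall fun z => ?_)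
    simp only [hQ'def, hQdef, hTdef]
    ring
  rw [e1, e2]
  linarith

/-! ### Positivity of the derivative -/

lemma D_pos {u : ℝ} (hu : 0 < u) : 0 < D u := by
  set T : ℝ → ℝ := fun z => Real.tanh (u ^ 2 + u * z) with hTdef
  have hcontT : Continuous T := continuous_tanh.comp (by fun_prop)
  have habsQ : ∀ z, |1 - T z ^ 2| ≤ 1 := by
    intro z
    rw [abs_of_pos (one_sub_sq_tanh_pos _)]
    exact one_sub_sq_tanh_le_one _
  have I1 : Integrable (fun z => (1 - T z ^ 2) * (2 * u)) (gaussianReal 0 1) := by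
    refine integrable_of_bounded (by fun_prop) (1 * (2 * u)) fun z => ?_
    rw [abs_mul]
    refine mul_le_mul (habsQ z) ?_ (abs_nonneg _) one_pos.le
    rw [abs_of_pos (by positivity)]
  have I2 : Integrable (fun z => (1 - T z ^ 2) * z) (gaussianReal 0 1) := by
    have := integrable_id_mul_bounded (f := fun z => 1 - T z ^ 2)
      (continuous_const.sub (hcontT.pow 2)) 1 habsQ
    refine this.congr (Eventually.of_forall fun z => ?_)
    ring
  have I3 : Integrable (fun z => -(2 * T z * ((1 - T z ^ 2) * u))) (gaussianReal 0 1) := by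
    refine integrable_of_bounded (by fun_prop) (2 * u) fun z => ?_
    rw [abs_neg, abs_mul, abs_mul, abs_mul]
    have h1 : |T z| ≤ 1 := abs_tanh_le_one _
    have h2 := habsQ z
    have h3 : |u| = u := abs_of_pos hu
    have h4 : |(2:ℝ)| = 2 := by norm_num
    rw [h3, h4]
    nlinarith [abs_nonneg (T z), abs_nonneg (1 - T z ^ 2), hu.le,
      mul_le_mul h1 h2 (abs_nonneg _) zero_le_one]
  have hsplit : D u = (∫ z, (1 - T z ^ 2) * (2 * u) ∂(gaussianReal 0 1))
      + ∫ z, (1 - T z ^ 2) * z ∂(gaussianReal 0 1) := by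
    rw [D, ← integral_add I1 I2]
    refine integral_congr_ae (Eventually.of_forall fun z => ?_)
    simp only [hTdef]
    ring
  rw [hsplit, stein u]
  have hcomb : (∫ z, (1 - T z ^ 2) * (2 * u) ∂(gaussianReal 0 1))
      + (∫ z, -(2 * Real.tanh (u ^ 2 + u * z)
          * ((1 - Real.tanh (u ^ 2 + u * z) ^ 2) * u)) ∂(gaussianReal 0 1))
      = ∫ z, 2 * u * ((1 - T z ^ 2) * (1 - T z)) ∂(gaussianReal 0 1) := by
    rw [← integral_add I1 I3]
    refine integral_congr_ae (Eventually.of_forall fun z => ?_)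
    simp only [hTdef]
    ring
  rw [hcomb]
  have hpos : ∀ z, 0 < 2 * u * ((1 - T z ^ 2) * (1 - T z)) := by
    intro z
    have h1 := one_sub_sq_tanh_pos (u ^ 2 + u * z)
    have h2 := tanh_lt_one (u ^ 2 + u * z)
    have : (0:ℝ) < 1 - T z := by simp only [hTdef]; linarith
    have h1' : (0:ℝ) < 1 - T z ^ 2 := h1
    positivity
  have hint : Integrable (fun z => 2 * u * ((1 - T z ^ 2) * (1 - T z)))
      (gaussianReal 0 1) := by
    refine integrable_of_bounded (by fun_prop) (2 * u * (1 * 2)) fun z => ?_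
    have h1 := one_sub_sq_tanh_pos (u ^ 2 + u * z)
    have h2 := one_sub_sq_tanh_le_one (u ^ 2 + u * z)
    have h3 := tanh_lt_one (u ^ 2 + u * z)
    have h4 := neg_one_lt_tanh (u ^ 2 + u * z)
    rw [abs_of_pos (hpos z)]
    simp only [hTdef]
    nlinarith [mul_le_mul h2 (by linarith : 1 - Real.tanh (u ^ 2 + u * z) ≤ 2)
      (by linarith) zero_le_one, hu.le]
  rw [integral_pos_iff_support_of_nonneg (fun z => (hpos z).le) hint]
  have hsupp : Function.support (fun z => 2 * u * ((1 - T z ^ 2) * (1 - T z))) = Set.univ :=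
    Set.eq_univ_iff_forall.mpr fun z => Function.mem_support.mpr (hpos z).ne'
  rw [hsupp]
  simp

/-! ### Conclusion -/

lemma continuous_H : Continuous H :=
  continuous_iff_continuousAt.2 fun u => (hasDerivAt_H u).continuousAt

lemma strictMonoOn_H : StrictMonoOn H (Set.Ici 0) := by
  refine strictMonoOn_of_deriv_pos (convex_Ici 0) continuous_H.continuousOn fun x hx => ?_
  rw [interior_Ici] at hx
  rw [(hasDerivAt_H x).deriv]
  exact D_pos hx

lemma g_eq {s : ℝ} (hs : 0 ≤ s) : g s = H (Real.sqrt s) := by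
  unfold g H
  rw [Real.sq_sqrt hs]

end Stmt13Aux

/-- Core of the proof of Lemma F.2 (equivalent to the `q = 2` case of Sly's Lemma 4.4):
the function `g(s) = ∫ tanh(s + √s·z) dγ(z)` is continuous and strictly increasing
on `[0,∞)`. -/
theorem stmt13 : ContinuousOn g (Set.Ici 0) ∧ StrictMonoOn g (Set.Ici 0) := by
  constructor
  · refine ((Stmt13Aux.continuous_H.comp Real.continuous_sqrt).continuousOn).congr ?_
    intro s hs
    exact Stmt13Aux.g_eq hs
  · intro a ha b hb hab
    rw [Stmt13Aux.g_eq ha, Stmt13Aux.g_eq hb]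
    exact Stmt13Aux.strictMonoOn_H (Real.sqrt_nonneg a) (Real.sqrt_nonneg b)
      (Real.sqrt_lt_sqrt ha hab)
end
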